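/- arXiv:2206.12314 — 2 statements merged into one kernel-verified Lean document; each statement's English description precedes it below -/
import Mathlib

section
/- Suppose a predictor fⁿ and target f* on the circle satisfy fⁿ(xᵢ) = f*(xᵢ) at ordered points 0 = x₁ < … < x_n < x_{n+1} = 2π, f* is C² with bounded second derivative, and on each interval (xᵢ, xᵢ₊₁) the predictor fⁿ is C² with |fⁿ''(x) − f*''(x)| ≤ M uniformly. Then the squared L2 error satisfies ∫₀^{2π}(fⁿ − f*)² dx ≤ (M²/120)·Σᵢ δᵢ⁵ + o(Σᵢ δᵢ⁵), where δᵢ = xᵢ₊₁ − xᵢ; in particular the error on interval i is bounded by (M²/120)·δᵢ⁵ up to higher-order terms. -/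
open Real intervalIntegral Finset


/-- Pointwise bound for a function vanishing at endpoints with bounded second derivative. -/
lemma key_pointwise {a b M : ℝ} (hab : a < b) {h : ℝ → ℝ}
    (hc : ContinuousOn h (Set.Icc a b))
    (hd : ∀ t ∈ Set.Ioo a b, DifferentiableAt ℝ h t ∧ DifferentiableAt ℝ (deriv h) t)
    (hM : ∀ t ∈ Set.Ioo a b, |deriv (deriv h) t| ≤ M)
    (ha : h a = 0) (hb : h b = 0) :
    ∀ t ∈ Set.Icc a b, |h t| ≤ M / 2 * ((t - a) * (b - t)) := by
  have hM0 : 0 ≤ M :=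
    le_trans (abs_nonneg _) (hM ((a+b)/2) ⟨by linarith, by linarith⟩)
  intro t ht
  rcases eq_or_lt_of_le ht.1 with rfl | hat
  · simp [ha]
  rcases eq_or_lt_of_le ht.2 with rfl | htb
  · simp [hb]
  have hta : (0:ℝ) < t - a := by linarith
  have hbt : (0:ℝ) < b - t := by linarith
  set K : ℝ := 2 * h t / ((t - a) * (b - t)) with hK
  set g : ℝ → ℝ := fun s => h s - K * ((s - a) * (b - s) / 2) with hg
  have hprod : (t - a) * (b - t) ≠ 0 := by positivity
  have hht : h t = K * ((t - a) * (b - t) / 2) := by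
    rw [hK]; field_simp
  have hga : g a = 0 := by simp [hg, ha]
  have hgb : g b = 0 := by simp [hg, hb]
  have hgt : g t = 0 := by simp [hg, hht]
  have hgc : ContinuousOn g (Set.Icc a b) := by
    apply hc.sub; fun_prop
  -- Rolle on [a,t] and [t,b]
  obtain ⟨ξ₁, hξ₁, hg1⟩ := exists_deriv_eq_zero hat
    (hgc.mono (Set.Icc_subset_Icc le_rfl ht.2)) (hga.trans hgt.symm)
  obtain ⟨ξ₂, hξ₂, hg2⟩ := exists_deriv_eq_zero htb
    (hgc.mono (Set.Icc_subset_Icc ht.1 le_rfl)) (hgt.trans hgb.symm)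
  have hξ12 : ξ₁ < ξ₂ := lt_trans hξ₁.2 hξ₂.1
  have hsub : Set.Icc ξ₁ ξ₂ ⊆ Set.Ioo a b := fun s hs =>
    ⟨lt_of_lt_of_le hξ₁.1 hs.1, lt_of_le_of_lt hs.2 hξ₂.2⟩
  -- derivative formula for g on Ioo a b
  have hgd : ∀ s ∈ Set.Ioo a b,
      HasDerivAt g (deriv h s - K * ((a + b - 2*s)/2)) s := by
    intro s hs
    have h1 : HasDerivAt (fun u => (u - a) * (b - u) / 2) ((a + b - 2*s)/2) s := by
      have := (((hasDerivAt_id s).sub_const a).mul ((hasDerivAt_const s b).sub (hasDerivAt_id s))).div_const 2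
      refine this.congr_deriv ?_; simp only [Pi.sub_apply, id_eq]; ring
    exact ((hd s hs).1.hasDerivAt).sub ((h1.const_mul K))
  have hderiv_g : Set.EqOn (deriv g) (fun s => deriv h s - K * ((a + b - 2*s)/2))
      (Set.Ioo a b) := fun s hs => (hgd s hs).deriv
  have hgcont : ContinuousOn (deriv g) (Set.Icc ξ₁ ξ₂) := by
    intro s hs
    have hs' := hsub hs
    have hev : deriv g =ᶠ[nhds s] (fun u => deriv h u - K * ((a + b - 2*u)/2)) := by
      filter_upwards [Ioo_mem_nhds hs'.1 hs'.2] with u hu using hderiv_g hu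
    have : ContinuousAt (fun u => deriv h u - K * ((a + b - 2*u)/2)) s := by
      apply ContinuousAt.sub ((hd s hs').2.continuousAt); fun_prop
    exact (this.congr hev.symm).continuousWithinAt
  obtain ⟨ξ, hξ, hgg⟩ := exists_deriv_eq_zero hξ12 hgcont
    (by rw [hg1, hg2])
  have hξab : ξ ∈ Set.Ioo a b := hsub ⟨le_of_lt hξ.1, le_of_lt hξ.2⟩
  -- second derivative of g at ξ
  have hev : deriv g =ᶠ[nhds ξ] (fun u => deriv h u - K * ((a + b - 2*u)/2)) := by
    filter_upwards [Ioo_mem_nhds hξab.1 hξab.2] with u hu using hderiv_g hu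
  have h2 : HasDerivAt (fun u => deriv h u - K * ((a + b - 2*u)/2))
      (deriv (deriv h) ξ + K) ξ := by
    have hlin : HasDerivAt (fun u : ℝ => K * ((a + b - 2*u)/2)) (-K) ξ := by
      have := ((((hasDerivAt_const ξ (a+b)).sub ((hasDerivAt_id ξ).const_mul 2)).div_const 2).const_mul K)
      refine this.congr_deriv ?_; ring
    have := ((hd ξ hξab).2.hasDerivAt).sub hlin
    refine this.congr_deriv ?_; ring
  have hdd : deriv (deriv g) ξ = deriv (deriv h) ξ + K := by
    rw [Filter.EventuallyEq.deriv_eq hev]; exact h2.deriv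
  have hKval : K = - deriv (deriv h) ξ := by
    have := hgg; rw [hdd] at this; linarith
  have hKbound : |K| ≤ M := by rw [hKval, abs_neg]; exact hM ξ hξab
  calc |h t| = |K| * ((t - a) * (b - t) / 2) := by
        rw [hht, abs_mul]
        congr 1
        exact abs_of_pos (by positivity)
    _ ≤ M * ((t - a) * (b - t) / 2) := by
        apply mul_le_mul_of_nonneg_right hKbound; positivity
    _ = M / 2 * ((t - a) * (b - t)) := by ring

/-- Integral bound from the pointwise bound. -/
lemma key_interval {a b M : ℝ} (hab : a < b) (hM0 : 0 ≤ M) {h : ℝ → ℝ}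
    (hc : ContinuousOn h (Set.Icc a b))
    (hbound : ∀ t ∈ Set.Icc a b, |h t| ≤ M / 2 * ((t - a) * (b - t))) :
    ∫ t in a..b, (h t)^2 ≤ M^2/120 * (b - a)^5 := by
  have hab' : a ≤ b := le_of_lt hab
  have hint1 : IntervalIntegrable (fun t => (h t)^2) MeasureTheory.volume a b := by
    apply ContinuousOn.intervalIntegrable
    rw [Set.uIcc_of_le hab']
    exact (hc.pow 2)
  have hint2 : IntervalIntegrable (fun t => (M/2 * ((t - a) * (b - t)))^2)
      MeasureTheory.volume a b := by
    apply ContinuousOn.intervalIntegrable; fun_prop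
  have hmono : ∫ t in a..b, (h t)^2 ≤ ∫ t in a..b, (M/2 * ((t - a) * (b - t)))^2 := by
    apply intervalIntegral.integral_mono_on hab' hint1 hint2
    intro t ht
    have := hbound t ht
    calc (h t)^2 = |h t|^2 := (sq_abs _).symm
      _ ≤ (M/2 * ((t - a) * (b - t)))^2 := by
          apply pow_le_pow_left₀ (abs_nonneg _) this
  have hval : ∫ t in a..b, (M/2 * ((t - a) * (b - t)))^2 = M^2/120 * (b - a)^5 := by
    have hF : ∀ t ∈ Set.uIcc a b, HasDerivAt
        (fun t => M^2/4 * ((b-a)^2*(t-a)^3/3 - (b-a)*(t-a)^4/2 + (t-a)^5/5))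
        ((M/2 * ((t - a) * (b - t)))^2) t := by
      intro t _
      have h1 : HasDerivAt (fun u : ℝ => u - a) 1 t := (hasDerivAt_id t).sub_const a
      have h3 := h1.pow 3
      have h4 := h1.pow 4
      have h5 := h1.pow 5
      have := ((((h3.const_mul ((b-a)^2)).div_const 3).sub ((h4.const_mul (b-a)).div_const 2)).add (h5.div_const 5)).const_mul (M^2/4)
      refine this.congr_deriv ?_
      push_cast; ring
    rw [intervalIntegral.integral_eq_sub_of_hasDerivAt hF hint2]
    ring
  linarith

/-- If a predictor `fⁿ` matches a `C²` target `f*` at ordered points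
`0 = x₁ < … < x_n < x_{n+1} = 2π`, is continuous, and on each interval `(xᵢ, xᵢ₊₁)` is
twice differentiable with `|fⁿ'' − f*''| ≤ M`, then
`∫₀^{2π}(fⁿ − f*)² ≤ (M²/120)·Σᵢ δᵢ⁵` with `δᵢ = xᵢ₊₁ − xᵢ`. -/
theorem predictor_error_bound (n : ℕ) (hn : 1 ≤ n)
    (x : ℕ → ℝ) (hx1 : x 1 = 0) (hxend : x (n+1) = 2*π)
    (hmono : StrictMonoOn x (Set.Icc 1 (n+1)))
    (fn fstar : ℝ → ℝ) (M : ℝ)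
    (hfstar : ContDiff ℝ 2 fstar)
    (hfncont : ContinuousOn fn (Set.Icc 0 (2*π)))
    (hinterp : ∀ i ∈ Finset.Icc 1 (n+1), fn (x i) = fstar (x i))
    (hdiff : ∀ i ∈ Finset.Icc 1 n, ∀ t ∈ Set.Ioo (x i) (x (i+1)),
      DifferentiableAt ℝ fn t ∧ DifferentiableAt ℝ (deriv fn) t)
    (hM : ∀ i ∈ Finset.Icc 1 n, ∀ t ∈ Set.Ioo (x i) (x (i+1)),
      |deriv (deriv fn) t - deriv (deriv fstar) t| ≤ M) :
    ∫ t in (0:ℝ)..(2*π), (fn t - fstar t)^2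
      ≤ M^2/120 * ∑ i ∈ Finset.Icc 1 n, (x (i+1) - x i)^5 := by
  set h : ℝ → ℝ := fun t => fn t - fstar t with hh
  have hfd : Differentiable ℝ fstar := hfstar.differentiable (by norm_num)
  have hfd' : Differentiable ℝ (deriv fstar) := by
    have h2 : ContDiff ℝ ((1:ℕ) + 1) fstar := by exact_mod_cast hfstar
    exact ((contDiff_succ_iff_deriv.mp h2).2.2).differentiable (by norm_num)
  -- ordering facts
  have hmem : ∀ i, 1 ≤ i → i ≤ n + 1 → (i : ℕ) ∈ Set.Icc 1 (n+1) := fun i h1 h2 => ⟨h1, h2⟩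
  have hle : ∀ i j, 1 ≤ i → j ≤ n + 1 → i ≤ j → x i ≤ x j := by
    intro i j h1 h2 hij
    exact hmono.monotoneOn (hmem i h1 (le_trans hij h2)) (hmem j (le_trans h1 hij) h2) hij
  have hlt : ∀ i, 1 ≤ i → i ≤ n → x i < x (i+1) := by
    intro i h1 h2
    exact hmono (hmem i h1 (by omega)) (hmem (i+1) (by omega) (by omega)) (by omega)
  have hcont : ContinuousOn h (Set.Icc 0 (2*π)) :=
    hfncont.sub (hfd.continuous.continuousOn)
  have hsubset : ∀ i, 1 ≤ i → i ≤ n → Set.Icc (x i) (x (i+1)) ⊆ Set.Icc 0 (2*π) := by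
    intro i h1 h2
    apply Set.Icc_subset_Icc
    · rw [← hx1]; exact hle 1 i le_rfl (by omega) h1
    · rw [← hxend]; exact hle (i+1) (n+1) (by omega) le_rfl (by omega)
  -- M ≥ 0
  have hM0 : 0 ≤ M := by
    have h12 : x 1 < x 2 := hlt 1 le_rfl hn
    refine le_trans (abs_nonneg _) (hM 1 (by simp [hn]) ((x 1 + x 2)/2) ⟨by linarith, by linarith⟩)
  -- per-interval bound
  have key : ∀ i ∈ Finset.Icc 1 n,
      (∫ t in (x i)..(x (i+1)), (h t)^2) ≤ M^2/120 * (x (i+1) - x i)^5 := by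
    intro i hi
    rw [Finset.mem_Icc] at hi
    have hab : x i < x (i+1) := hlt i hi.1 hi.2
    have hi' : i ∈ Finset.Icc 1 n := Finset.mem_Icc.mpr hi
    have hc : ContinuousOn h (Set.Icc (x i) (x (i+1))) :=
      hcont.mono (hsubset i hi.1 hi.2)
    have hd : ∀ t ∈ Set.Ioo (x i) (x (i+1)),
        DifferentiableAt ℝ h t ∧ DifferentiableAt ℝ (deriv h) t := by
      intro t ht
      have hev : deriv h =ᶠ[nhds t] (fun s => deriv fn s - deriv fstar s) := by
        filter_upwards [Ioo_mem_nhds ht.1 ht.2] with s hs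
        exact deriv_sub (hdiff i hi' s hs).1 (hfd s)
      refine ⟨(hdiff i hi' t ht).1.sub (hfd t), ?_⟩
      exact (((hdiff i hi' t ht).2.sub (hfd' t)).congr_of_eventuallyEq hev)
    have hMh : ∀ t ∈ Set.Ioo (x i) (x (i+1)), |deriv (deriv h) t| ≤ M := by
      intro t ht
      have hev : deriv h =ᶠ[nhds t] (fun s => deriv fn s - deriv fstar s) := by
        filter_upwards [Ioo_mem_nhds ht.1 ht.2] with s hs
        exact deriv_sub (hdiff i hi' s hs).1 (hfd s)
      have : deriv (deriv h) t = deriv (deriv fn) t - deriv (deriv fstar) t := by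
        rw [hev.deriv_eq]
        exact deriv_sub (hdiff i hi' t ht).2 (hfd' t)
      rw [this]
      exact hM i hi' t ht
    have ha : h (x i) = 0 := by
      have := hinterp i (Finset.mem_Icc.mpr ⟨hi.1, by omega⟩)
      simp [hh, this]
    have hb : h (x (i+1)) = 0 := by
      have := hinterp (i+1) (Finset.mem_Icc.mpr ⟨by omega, by omega⟩)
      simp [hh, this]
    exact key_interval hab hM0 hc (key_pointwise hab hc hd hMh ha hb)
  -- split the integral
  have hsplit : ∫ t in (0:ℝ)..(2*π), (h t)^2
      = ∑ i ∈ Finset.Icc 1 n, ∫ t in (x i)..(x (i+1)), (h t)^2 := by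
    rw [← hx1, ← hxend, ← Finset.Ico_add_one_right_eq_Icc]
    rw [intervalIntegral.sum_integral_adjacent_intervals_Ico (by omega)]
    intro k hk
    simp only [Finset.mem_Ico, Set.mem_Ico] at hk
    apply ContinuousOn.intervalIntegrable
    rw [Set.uIcc_of_le (le_of_lt (hlt k hk.1 (by omega)))]
    exact ((hcont.mono (hsubset k hk.1 (by omega))).pow 2)
  calc ∫ t in (0:ℝ)..(2*π), (fn t - fstar t)^2
      = ∑ i ∈ Finset.Icc 1 n, ∫ t in (x i)..(x (i+1)), (h t)^2 := hsplit
    _ ≤ ∑ i ∈ Finset.Icc 1 n, M^2/120 * (x (i+1) - x i)^5 := Finset.sum_le_sum key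
    _ = M^2/120 * ∑ i ∈ Finset.Icc 1 n, (x (i+1) - x i)^5 := by rw [Finset.mul_sum]
end

section
/- Define κ(n) implicitly by κ = (1/n)·∫₀^{φ₀} D(φ)·φκ/(φ+κ) dφ with eigenvalue density D(φ) = φ^{−(2(d−1)+2ν)/((d−1)+2ν)} for φ ∈ (0, φ₀]. Then as n → ∞, κ(n) = Θ(n^{−1−2ν/(d−1)}). -/
open Filter MeasureTheory intervalIntegral

/-- If `κ(n)` satisfies the self-consistency equation
`κ = (1/n)·∫₀^{φ₀} D(φ)·φκ/(φ+κ) dφ` with eigenvalue density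
`D(φ) = φ^{−(2(d−1)+2ν)/((d−1)+2ν)}`, then `κ(n) = Θ(n^{−1−2ν/(d−1)})` as `n → ∞`. -/
theorem kappa_asymptotics (d : ℕ) (hd : 2 ≤ d) (ν φ₀ : ℝ) (hν : 0 < ν) (hφ₀ : 0 < φ₀)
    (κ : ℕ → ℝ) (hκpos : ∀ n, 0 < κ n)
    (hself : ∀ n : ℕ, 1 ≤ n → κ n = (1/(n:ℝ)) *
      ∫ φ in (0:ℝ)..φ₀,
        φ^(-(2*((d:ℝ)-1)+2*ν)/(((d:ℝ)-1)+2*ν)) * (φ * κ n / (φ + κ n))) :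
    ∃ c₁ c₂ : ℝ, 0 < c₁ ∧ 0 < c₂ ∧ ∀ᶠ n : ℕ in atTop,
      c₁ * (n:ℝ)^(-1-2*ν/((d:ℝ)-1)) ≤ κ n ∧ κ n ≤ c₂ * (n:ℝ)^(-1-2*ν/((d:ℝ)-1)) := by
  have hD0 : (0:ℝ) < (d:ℝ) - 1 := by
    have : (2:ℝ) ≤ (d:ℝ) := by exact_mod_cast hd
    linarith
  set D : ℝ := (d:ℝ) - 1 with hDdef
  set a : ℝ := -(2*D+2*ν)/(D+2*ν) with hadef
  set p : ℝ := a + 1 with hpdef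
  have hDν : (0:ℝ) < D + 2*ν := by linarith
  have hp : p = -D/(D+2*ν) := by
    rw [hpdef, hadef]; field_simp; ring
  have hp1 : p < 0 := by
    rw [hp]; exact div_neg_of_neg_of_pos (by linarith) hDν
  have hp0 : (-1:ℝ) < p := by
    rw [hp, neg_div]
    have : D/(D+2*ν) < 1 := (div_lt_one hDν).2 (by linarith)
    linarith
  have h1p : (0:ℝ) < p + 1 := by linarith
  clear_value D a p
  -- pointwise rewriting of the integrand
  have feq : ∀ k : ℝ, 0 < k → ∀ x : ℝ, 0 < x →
      x^a * (x*k/(x+k)) = x^p * (k/(x+k)) := by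
    intro k hk x hx
    rw [hpdef, Real.rpow_add_one hx.ne']
    ring
  -- nonnegativity of the integrand
  have fnn : ∀ k : ℝ, 0 < k → ∀ x : ℝ, 0 ≤ x →
      0 ≤ x^a * (x*k/(x+k)) := by
    intro k hk x hx
    exact mul_nonneg (Real.rpow_nonneg hx _)
      (div_nonneg (mul_nonneg hx hk.le) (by linarith))
  -- upper pointwise bound
  have fle : ∀ k : ℝ, 0 < k → ∀ x : ℝ, 0 ≤ x →
      x^a * (x*k/(x+k)) ≤ x^p := by
    intro k hk x hx
    rcases eq_or_lt_of_le hx with h0 | h0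
    · simp [← h0, Real.zero_rpow hp1.ne]
    · rw [feq k hk x h0]
      have h1 : k/(x+k) ≤ 1 := (div_le_one (by linarith)).2 (by linarith)
      calc x^p * (k/(x+k)) ≤ x^p * 1 :=
            mul_le_mul_of_nonneg_left h1 (Real.rpow_nonneg h0.le _)
        _ = x^p := mul_one _
  -- lower pointwise bound on [0,k]
  have flow : ∀ k : ℝ, 0 < k → ∀ x ∈ Set.Icc (0:ℝ) k,
      (1/2) * x^p ≤ x^a * (x*k/(x+k)) := by
    intro k hk x hx
    rcases eq_or_lt_of_le hx.1 with h0 | h0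
    · simp [← h0, Real.zero_rpow hp1.ne]
    · rw [feq k hk x h0]
      have h1 : (1:ℝ)/2 ≤ k/(x+k) := by
        rw [le_div_iff₀ (by linarith)]
        nlinarith [hx.2]
      calc (1/2) * x^p = x^p * (1/2) := by ring
        _ ≤ x^p * (k/(x+k)) := mul_le_mul_of_nonneg_left h1 (Real.rpow_nonneg h0.le _)
  -- upper pointwise bound on [k,φ₀]
  have fhigh : ∀ k : ℝ, 0 < k → ∀ x ∈ Set.Icc k φ₀,
      x^a * (x*k/(x+k)) ≤ k * x^(p-1) := by
    intro k hk x hx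
    have hx0 : 0 < x := lt_of_lt_of_le hk hx.1
    rw [feq k hk x hx0]
    have h1 : k/(x+k) ≤ k/x :=
      div_le_div_of_nonneg_left hk.le hx0 (by linarith)
    calc x^p * (k/(x+k)) ≤ x^p * (k/x) :=
          mul_le_mul_of_nonneg_left h1 (Real.rpow_nonneg hx0.le _)
      _ = k * (x^p/x) := by ring
      _ = k * x^(p-1) := by rw [Real.rpow_sub_one hx0.ne']
  -- integrability
  have hgint : ∀ c b : ℝ, IntervalIntegrable (fun x : ℝ => x ^ p) volume c b :=
    fun c b => intervalIntegral.intervalIntegrable_rpow' hp0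
  have hfint : ∀ k : ℝ, 0 < k → ∀ b : ℝ, 0 < b →
      IntervalIntegrable (fun x : ℝ => x^a * (x*k/(x+k))) volume 0 b := by
    intro k hk b hb
    rw [intervalIntegrable_iff_integrableOn_Ioc_of_le hb.le]
    have hg : IntegrableOn (fun x : ℝ => x ^ p) (Set.Ioc 0 b) := by
      have := hgint 0 b
      rwa [intervalIntegrable_iff_integrableOn_Ioc_of_le hb.le] at this
    apply Integrable.mono' hg
    · apply ContinuousOn.aestronglyMeasurable _ measurableSet_Ioc
      apply ContinuousOn.mul
      · exact ContinuousOn.rpow_const continuousOn_id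
          (fun x hx => Or.inl (ne_of_gt hx.1))
      · apply ContinuousOn.div
        · exact (continuousOn_id.mul continuousOn_const)
        · exact continuousOn_id.add continuousOn_const
        · intro x hx
          have : 0 < x + k := by linarith [hx.1]
          exact this.ne'
    · filter_upwards [ae_restrict_mem measurableSet_Ioc] with x hx
      rw [Real.norm_of_nonneg (fnn k hk x hx.1.le)]
      exact fle k hk x hx.1.le
  -- integral of x^p from 0 to b
  have hI1 : ∀ b : ℝ, 0 < b → ∫ x in (0:ℝ)..b, x ^ p = b^(p+1)/(p+1) := by
    intro b hb
    rw [integral_rpow (Or.inl hp0), Real.zero_rpow h1p.ne', sub_zero]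
  -- constants
  set clo : ℝ := 1/(2*(p+1)) with hclodef
  set chi : ℝ := 1/(p+1) + 1/(-p) with hchidef
  have hclo : 0 < clo := by rw [hclodef]; positivity
  have hchi : 0 < chi := by
    rw [hchidef]
    have h1 : (0:ℝ) < 1/(p+1) := by positivity
    have h2 : (0:ℝ) < 1/(-p) := div_pos one_pos (by linarith)
    linarith
  set M : ℝ := φ₀^(p+1)/(p+1) with hMdef
  have hM : 0 < M := by
    rw [hMdef]; exact div_pos (Real.rpow_pos_of_pos hφ₀ _) h1p
  clear_value clo chi M
  -- the main bounds for a fixed (large enough) n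
  have main : ∀ n : ℕ, 1 ≤ n → M/(n:ℝ) ≤ φ₀ →
      clo * (κ n)^(p+1) ≤ (n:ℝ) * κ n ∧ (n:ℝ) * κ n ≤ chi * (κ n)^(p+1) := by
    intro n hn hnM
    have hn0 : (0:ℝ) < n := by exact_mod_cast hn
    set k : ℝ := κ n with hkdef
    have hk : 0 < k := hκpos n
    set I : ℝ := ∫ φ in (0:ℝ)..φ₀, φ^a * (φ * k / (φ + k)) with hIdef
    have hnk : (n:ℝ) * k = I := by
      rw [hkdef, hself n hn]
      rw [hIdef]
      field_simp
      rfl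
    -- crude upper bound : I ≤ M, hence k ≤ φ₀
    have hIM : I ≤ M := by
      rw [hIdef, hMdef, ← hI1 φ₀ hφ₀]
      exact intervalIntegral.integral_mono_on hφ₀.le (hfint k hk φ₀ hφ₀) (hgint 0 φ₀)
        (fun x hx => fle k hk x hx.1)
    have hkφ : k ≤ φ₀ := by
      have h1 : (n:ℝ) * k ≤ M := hnk ▸ hIM
      have h2 : k ≤ M / n := by
        rw [le_div_iff₀ hn0]; linarith [h1]
      linarith [hnM]
    -- split the integral
    have hint1 : IntervalIntegrable (fun x : ℝ => x^a * (x*k/(x+k))) volume 0 k :=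
      hfint k hk k hk
    have hint2 : IntervalIntegrable (fun x : ℝ => x^a * (x*k/(x+k))) volume k φ₀ :=
      hint1.symm.trans (hfint k hk φ₀ hφ₀)
    have hsplit : (∫ x in (0:ℝ)..k, x^a * (x*k/(x+k)))
        + (∫ x in k..φ₀, x^a * (x*k/(x+k))) = I := by
      rw [hIdef]
      exact intervalIntegral.integral_add_adjacent_intervals hint1 hint2
    -- lower bound
    have hA_low : (1/2) * (k^(p+1)/(p+1)) ≤ ∫ x in (0:ℝ)..k, x^a * (x*k/(x+k)) := by
      have h := intervalIntegral.integral_mono_on hk.le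
        ((hgint 0 k).const_mul (1/2)) hint1 (flow k hk)
      rwa [intervalIntegral.integral_const_mul, hI1 k hk] at h
    have hB_low : 0 ≤ ∫ x in k..φ₀, x^a * (x*k/(x+k)) :=
      intervalIntegral.integral_nonneg hkφ
        (fun x hx => fnn k hk x (le_trans hk.le hx.1))
    have hlowI : clo * k^(p+1) ≤ I := by
      have heq : clo * k^(p+1) = (1/2) * (k^(p+1)/(p+1)) := by
        rw [hclodef]; field_simp [h1p.ne']
      rw [← hsplit, heq]; linarith
    -- upper bound
    have hA_hi : (∫ x in (0:ℝ)..k, x^a * (x*k/(x+k))) ≤ k^(p+1)/(p+1) := by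
      rw [← hI1 k hk]
      exact intervalIntegral.integral_mono_on hk.le hint1 (hgint 0 k)
        (fun x hx => fle k hk x hx.1)
    have hB_hi : (∫ x in k..φ₀, x^a * (x*k/(x+k))) ≤ k^(p+1)/(-p) := by
      have hmeas2 : IntervalIntegrable (fun x : ℝ => k * x^(p-1)) volume k φ₀ := by
        apply IntervalIntegrable.const_mul
        apply ContinuousOn.intervalIntegrable
        apply ContinuousOn.rpow_const continuousOn_id
        intro x hx
        rw [Set.uIcc_of_le hkφ] at hx
        exact Or.inl (ne_of_gt (lt_of_lt_of_le hk hx.1))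
      have h := intervalIntegral.integral_mono_on hkφ hint2 hmeas2 (fhigh k hk)
      rw [intervalIntegral.integral_const_mul] at h
      have hval : ∫ x in k..φ₀, x^(p-1) = (φ₀^p - k^p)/p := by
        rw [integral_rpow (Or.inr ⟨by linarith, Set.notMem_uIcc_of_lt hk hφ₀⟩)]
        rw [show p - 1 + 1 = p by ring]
      rw [hval] at h
      refine h.trans ?_
      have hφp : 0 < φ₀^p := Real.rpow_pos_of_pos hφ₀ p
      have heq : (φ₀^p - k^p)/p = (k^p - φ₀^p)/(-p) := by
        rw [← neg_div_neg_eq, neg_sub]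
      have hle2 : (k^p - φ₀^p)/(-p) ≤ k^p/(-p) := by
        exact div_le_div_of_nonneg_right (by linarith) (by linarith)
      have heq2 : k^(p+1)/(-p) = k * (k^p/(-p)) := by
        rw [Real.rpow_add_one hk.ne']; ring
      rw [heq, heq2]
      exact mul_le_mul_of_nonneg_left hle2 hk.le
    have hhiI : I ≤ chi * k^(p+1) := by
      have heq : chi * k^(p+1) = k^(p+1)/(p+1) + k^(p+1)/(-p) := by
        rw [hchidef]; field_simp [h1p.ne', hp1.ne]
      rw [← hsplit, heq]; linarith
    rw [hnk]
    exact ⟨hlowI, hhiI⟩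
  -- conclusion
  have hexp : 1/p = -1-2*ν/D := by
    rw [hp, one_div_div, div_neg, add_div, div_self hD0.ne']
    ring
  have hinvp : 1/p ≤ 0 := le_of_lt (div_neg_of_pos_of_neg one_pos hp1)
  refine ⟨(clo^(1/p))⁻¹, (chi^(1/p))⁻¹,
    inv_pos.2 (Real.rpow_pos_of_pos hclo _), inv_pos.2 (Real.rpow_pos_of_pos hchi _), ?_⟩
  have hev : ∀ᶠ n : ℕ in atTop, M/φ₀ ≤ (n:ℝ) :=
    tendsto_natCast_atTop_atTop.eventually_ge_atTop (M/φ₀)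
  filter_upwards [eventually_ge_atTop 1, hev] with n hn1 hn2
  have hn0 : (0:ℝ) < n := by exact_mod_cast hn1
  have hnM : M/(n:ℝ) ≤ φ₀ := by
    rw [div_le_iff₀ hn0]
    rw [div_le_iff₀ hφ₀] at hn2
    nlinarith
  obtain ⟨hlow, hhi⟩ := main n hn1 hnM
  have hk : 0 < κ n := hκpos n
  have hkp1 : (κ n)^(p+1) = (κ n)^p * κ n := Real.rpow_add_one hk.ne' p
  rw [hkp1] at hlow hhi
  have hlo2 : clo * (κ n)^p ≤ (n:ℝ) := by
    have h' : clo * (κ n)^p * κ n ≤ (n:ℝ) * κ n := by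
      calc clo * (κ n)^p * κ n = clo * ((κ n)^p * κ n) := by ring
        _ ≤ (n:ℝ) * κ n := hlow
    exact le_of_mul_le_mul_right h' hk
  have hhi2 : (n:ℝ) ≤ chi * (κ n)^p := by
    have h' : (n:ℝ) * κ n ≤ chi * (κ n)^p * κ n := by
      calc (n:ℝ) * κ n ≤ chi * ((κ n)^p * κ n) := hhi
        _ = chi * (κ n)^p * κ n := by ring
    exact le_of_mul_le_mul_right h' hk
  have hkp_le : (κ n)^p ≤ (n:ℝ)/clo := by
    rw [le_div_iff₀ hclo]; linarith
  have hkp_ge : (n:ℝ)/chi ≤ (κ n)^p := by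
    rw [div_le_iff₀ hchi]; linarith
  have hkpk : ((κ n)^p)^(1/p) = κ n := by
    rw [← Real.rpow_mul hk.le, mul_one_div_cancel hp1.ne, Real.rpow_one]
  have hkpp : 0 < (κ n)^p := Real.rpow_pos_of_pos hk p
  have hupper : κ n ≤ ((n:ℝ)/chi)^(1/p) := by
    have := Real.rpow_le_rpow_of_nonpos (div_pos hn0 hchi) hkp_ge hinvp
    rwa [hkpk] at this
  have hlower : ((n:ℝ)/clo)^(1/p) ≤ κ n := by
    have := Real.rpow_le_rpow_of_nonpos hkpp hkp_le hinvp
    rwa [hkpk] at this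
  have hdiv1 : ((n:ℝ)/clo)^(1/p) = (clo^(1/p))⁻¹ * (n:ℝ)^(1/p) := by
    rw [Real.div_rpow hn0.le hclo.le]; ring
  have hdiv2 : ((n:ℝ)/chi)^(1/p) = (chi^(1/p))⁻¹ * (n:ℝ)^(1/p) := by
    rw [Real.div_rpow hn0.le hchi.le]; ring
  rw [hdiv1] at hlower
  rw [hdiv2] at hupper
  rw [show (-1-2*ν/D : ℝ) = 1/p from hexp.symm]
  exact ⟨hlower, hupper⟩
end
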